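/- Being commensurably coHopfian is invariant under abstract commensurability: if groups G₁ and G₂ have isomorphic finite-index subgroups, then G₁ is commensurably coHopfian if and only if G₂ is. -/

import Mathlib

/-- A group is commensurably coHopfian if no finite-index subgroup embeds
(via an injective group homomorphism) onto an infinite-index subgroup. -/
def IsCommensurablyCoHopfian (G : Type*) [Group G] : Prop :=
  ∀ (K : Subgroup G), K.FiniteIndex → ∀ φ : K →* G, Function.Injective φ → φ.range.index ≠ 0

universe w

/-- Auxiliary reformulation: for all abstract groups `K` (in universe `w`) and all pairs of
injective homomorphisms `f g : K →* G`, if `f.range` has finite index then so does `g.range`. -/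
def AuxP (G : Type*) [Group G] : Prop :=
  ∀ (K : Type w) (_ : Group K) (f g : K →* G), Function.Injective f → Function.Injective g →
    f.range.index ≠ 0 → g.range.index ≠ 0

lemma indexMapInj {G H : Type*} [Group G] [Group H] (f : G →* H) (hf : Function.Injective f)
    (X : Subgroup G) : (X.map f).index = X.index * f.range.index := by
  rw [Subgroup.index_map, (MonoidHom.ker_eq_bot_iff f).2 hf, sup_bot_eq]

lemma auxP_of_cch {G : Type*} [Group G] (h : IsCommensurablyCoHopfian G) : AuxP.{w} G := by
  intro K _ f g hf hg hfi
  have hF : f.range.FiniteIndex := ⟨hfi⟩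
  set e := MonoidHom.ofInjective hf with he
  have hφ : Function.Injective (g.comp e.symm.toMonoidHom) :=
    hg.comp e.symm.injective
  have := h f.range hF (g.comp e.symm.toMonoidHom) hφ
  have hr : (g.comp e.symm.toMonoidHom).range = g.range := by
    ext x
    constructor
    · rintro ⟨y, rfl⟩; exact ⟨e.symm y, rfl⟩
    · rintro ⟨y, rfl⟩; exact ⟨e y, by simp⟩
  rwa [hr] at this

lemma cch_of_auxP {G : Type u} [Group G] (h : AuxP.{u} G) : IsCommensurablyCoHopfian G := by
  intro K hK φ hφ
  refine h K inferInstance K.subtype φ K.subtype_injective hφ ?_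
  rw [Subgroup.range_subtype]
  exact hK.index_ne_zero

lemma auxP_transfer {A : Type*} {B : Type*} [Group A] [Group B] (j : A →* B)
    (hj : Function.Injective j) (hji : j.range.index ≠ 0) :
    AuxP.{w} A ↔ AuxP.{w} B := by
  constructor
  · -- AuxP A → AuxP B
    intro hA K _ f g hf hg hfi
    -- pull everything back into A via j
    set L : Subgroup K := (j.range.comap f) ⊓ (j.range.comap g) with hL
    have hcom : ∀ (φ : K →* B), (j.range.comap φ).index ≠ 0 := by
      intro φ h0
      rw [Subgroup.index_comap] at h0
      have := Subgroup.relIndex_eq_zero_of_le_right le_top h0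
      rw [Subgroup.relIndex_top_right] at this
      exact hji this
    have hLf : (j.range.comap f).index ≠ 0 := hcom f
    have hLg : (j.range.comap g).index ≠ 0 := hcom g
    have hLi : L.index ≠ 0 := Subgroup.index_inf_ne_zero hLf hLg
    -- the lifts of f and g restricted to L
    set f₀ : L →* A := (MonoidHom.ofInjective hj).symm.toMonoidHom.comp
      ((f.comp L.subtype).codRestrict j.range (fun x => x.2.1)) with hf₀def
    set g₀ : L →* A := (MonoidHom.ofInjective hj).symm.toMonoidHom.comp
      ((g.comp L.subtype).codRestrict j.range (fun x => x.2.2)) with hg₀def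
    have hjf₀ : j.comp f₀ = f.comp L.subtype := by
      ext x
      exact MonoidHom.apply_ofInjective_symm hj _
    have hjg₀ : j.comp g₀ = g.comp L.subtype := by
      ext x
      exact MonoidHom.apply_ofInjective_symm hj _
    have hf₀ : Function.Injective f₀ := by
      have : Function.Injective (j.comp f₀) := by
        rw [hjf₀]; exact hf.comp L.subtype_injective
      exact fun a b hab => this (by simp [MonoidHom.comp_apply, hab])
    have hg₀ : Function.Injective g₀ := by
      have : Function.Injective (j.comp g₀) := by
        rw [hjg₀]; exact hg.comp L.subtype_injective
      exact fun a b hab => this (by simp [MonoidHom.comp_apply, hab])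
    have hrangef₀ : f₀.range.map j = L.map f := by
      rw [← MonoidHom.range_comp, hjf₀, MonoidHom.range_comp, Subgroup.range_subtype]
    have hrangeg₀ : g₀.range.map j = L.map g := by
      rw [← MonoidHom.range_comp, hjg₀, MonoidHom.range_comp, Subgroup.range_subtype]
    -- f₀.range has finite index in A
    have hf₀i : f₀.range.index ≠ 0 := by
      have h1 : (L.map f).index = L.index * f.range.index := indexMapInj f hf L
      have h2 : (f₀.range.map j).index = f₀.range.index * j.range.index :=
        indexMapInj j hj f₀.range
      rw [hrangef₀, h1] at h2
      intro h0
      rw [h0, zero_mul] at h2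
      exact mul_ne_zero hLi hfi h2
    -- apply AuxP A
    have hg₀i : g₀.range.index ≠ 0 := hA L inferInstance f₀ g₀ hf₀ hg₀ hf₀i
    -- conclude for g
    have h2 : (g₀.range.map j).index = g₀.range.index * j.range.index :=
      indexMapInj j hj g₀.range
    have hMg : (L.map g).index ≠ 0 := by
      rw [← hrangeg₀, h2]; exact mul_ne_zero hg₀i hji
    have hle : L.map g ≤ g.range := by
      rintro x ⟨y, _, rfl⟩; exact ⟨y, rfl⟩
    intro h0
    apply hMg
    rw [← Subgroup.relIndex_mul_index hle, h0, mul_zero]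
  · -- AuxP B → AuxP A
    intro hB K _ f g hf hg hfi
    have hjf : Function.Injective (j.comp f) := hj.comp hf
    have hjg : Function.Injective (j.comp g) := hj.comp hg
    have hfr : (j.comp f).range = f.range.map j := MonoidHom.range_comp j f
    have hgr : (j.comp g).range = g.range.map j := MonoidHom.range_comp j g
    have hfi' : (j.comp f).range.index ≠ 0 := by
      rw [hfr, indexMapInj j hj]; exact mul_ne_zero hfi hji
    have := hB K inferInstance (j.comp f) (j.comp g) hjf hjg hfi'
    rw [hgr, indexMapInj j hj] at this
    exact fun h0 => this (by rw [h0, zero_mul])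

theorem stmt2 {G₁ G₂ : Type*} [Group G₁] [Group G₂]
    (H₁ : Subgroup G₁) (H₂ : Subgroup G₂)
    (h₁ : H₁.FiniteIndex) (h₂ : H₂.FiniteIndex) (e : Nonempty (H₁ ≃* H₂)) :
    IsCommensurablyCoHopfian G₁ ↔ IsCommensurablyCoHopfian G₂ := by
  obtain ⟨e⟩ := e
  -- j₁ : H₁ →* G₁, j₂ : H₁ →* G₂
  have hj₁inj : Function.Injective H₁.subtype := H₁.subtype_injective
  have hj₁i : (H₁.subtype).range.index ≠ 0 := by
    rw [Subgroup.range_subtype]; exact h₁.index_ne_zero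
  set j₂ : H₁ →* G₂ := H₂.subtype.comp e.toMonoidHom with hj₂def
  have hj₂inj : Function.Injective j₂ := H₂.subtype_injective.comp e.injective
  have hj₂r : j₂.range = H₂ := by
    ext x
    constructor
    · rintro ⟨y, rfl⟩; exact (e y).2
    · intro hx; exact ⟨e.symm ⟨x, hx⟩, by simp [j₂]⟩
  have hj₂i : j₂.range.index ≠ 0 := by rw [hj₂r]; exact h₂.index_ne_zero
  constructor
  · intro h
    refine cch_of_auxP ?_
    exact (auxP_transfer j₂ hj₂inj hj₂i).1
      ((auxP_transfer H₁.subtype hj₁inj hj₁i).2 (auxP_of_cch h))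
  · intro h
    refine cch_of_auxP ?_
    exact (auxP_transfer H₁.subtype hj₁inj hj₁i).1
      ((auxP_transfer j₂ hj₂inj hj₂i).2 (auxP_of_cch h))
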